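/- For all d ≥ 1, a ≥ 1, and n ≥ 1, the generating function identity holds: ∑_{n≥0} q_d^{(a)}(n) q^n = ∑_{k≥0} q^{d·C(k,2) + ka} / ((q;q)_k), where C(k,2) = k(k−1)/2 and (q;q)_k = ∏_{j=1}^{k}(1−q^j). -/

import Mathlib

/-- Number of partitions of `n` all of whose parts satisfy `P`. -/
noncomputable def partCount (n : ℕ) (P : ℕ → Prop) : ℕ :=
  Nat.card {p : n.Partition // ∀ i ∈ p.parts, P i}

/-- `ρ(R; n)`: number of partitions of `n` with all parts in the set `R`. -/
noncomputable def rho (R : Set ℕ) (n : ℕ) : ℕ := partCount n (· ∈ R)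

/-- `q_d^{(a)}(n)`: partitions of `n` into parts ≥ `a`, distinct, with pairwise
differences at least `d`. -/
noncomputable def qpart (d a n : ℕ) : ℕ :=
  Nat.card {p : n.Partition //
    (∀ i ∈ p.parts, a ≤ i) ∧
    (∀ i : ℕ, p.parts.count i ≤ 1) ∧
    (∀ i ∈ p.parts, ∀ j ∈ p.parts, i ≠ j → d ≤ i - j ∨ d ≤ j - i)}

/-- `i ≡ ±b (mod d+3)`. -/
noncomputable def congMod (d b i : ℕ) : Prop :=
  i % (d + 3) = b % (d + 3) ∨ (i + b) % (d + 3) = 0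

/-- `Q_d^{(b)}(n)`: partitions of `n` into parts ≡ ±b (mod d+3). -/
noncomputable def Qfull (d b n : ℕ) : ℕ := partCount n (fun i => congMod d b i)

/-- `Q_d^{(b,-)}(n)`: as `Qfull`, excluding the part `d+3-b`. -/
noncomputable def Qdash (d b n : ℕ) : ℕ :=
  partCount n (fun i => congMod d b i ∧ i ≠ d + 3 - b)

/-- `Q_d^{(b,-,-)}(n)`: as `Qfull`, excluding the parts `b` and `d+3-b`. -/
noncomputable def Qddash (d b n : ℕ) : ℕ :=
  partCount n (fun i => congMod d b i ∧ i ≠ b ∧ i ≠ d + 3 - b)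

/-- $(q;q)_k = \prod_{j=1}^k (1 - q^j)$ as a formal power series over ℚ. -/
noncomputable def qPoch (k : ℕ) : PowerSeries ℚ :=
  ∏ j ∈ Finset.range k, (1 - (PowerSeries.X : PowerSeries ℚ) ^ (j + 1))


namespace S5
open PowerSeries Finset
open scoped Classical


noncomputable def yf (P : Multiset ℕ) (i : ℕ) : ℕ := (P.sort (· ≤ ·)).getD i 0

theorem yf_gaps (hd : 1 ≤ d)
    (hnd : ∀ i : ℕ, P.count i ≤ 1)
    (hgap : ∀ i ∈ P, ∀ j ∈ P, i ≠ j → d ≤ i - j ∨ d ≤ j - i)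
    {i j : ℕ} (hij : i < j) (hj : j < P.card) : yf P i + d ≤ yf P j := by
  set l := P.sort (· ≤ ·) with hl
  have hsort : l.Pairwise (· ≤ ·) := P.pairwise_sort _
  have hco : (l : Multiset ℕ) = P := P.sort_eq _
  have hnd' : l.Nodup := by
    rw [← Multiset.coe_nodup, hco]
    exact Multiset.nodup_iff_count_le_one.2 hnd
  have hpw : l.Pairwise (fun x y => x + d ≤ y) := by
    have h1 : l.Pairwise (· ≤ ·) := hsort
    have h2 : l.Pairwise (· ≠ ·) := hnd'
    refine List.Pairwise.imp_of_mem ?_ (h1.and h2)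
    rintro x y hx hy ⟨hle, hne⟩
    have hxP : x ∈ P := by rw [← hco]; exact_mod_cast hx
    have hyP : y ∈ P := by rw [← hco]; exact_mod_cast hy
    rcases hgap x hxP y hyP hne with h | h
    · omega
    · omega
  have hlen : l.length = P.card := by rw [← Multiset.coe_card, hco]
  rw [List.pairwise_iff_get] at hpw
  have := hpw ⟨i, by omega⟩ ⟨j, by omega⟩ (by simpa using hij)
  simpa [yf, ← hl, List.getD_eq_get, List.getD_eq_getElem?_getD, List.getElem?_eq_getElem,
    (by omega : i < l.length), (by omega : j < l.length)] using this


theorem yf_mem {i : ℕ} (hi : i < P.card) : yf P i ∈ P := by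
  have hlen : (P.sort (· ≤ ·)).length = P.card := P.length_sort _
  have h : yf P i ∈ P.sort (· ≤ ·) := by
    rw [yf, List.getD_eq_getElem _ _ (by omega)]
    exact List.getElem_mem _
  have h2 : yf P i ∈ ((P.sort (· ≤ ·)) : Multiset ℕ) := Multiset.mem_coe.mpr h
  rwa [P.sort_eq (· ≤ ·)] at h2

theorem parts_eq_map : P = Multiset.map (yf P) (range P.card).val := by
  have hlen : (P.sort (· ≤ ·)).length = P.card := P.length_sort _
  conv_lhs => rw [← P.sort_eq (· ≤ ·)]
  have : P.sort (· ≤ ·) = (List.range P.card).map (yf P) := by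
    apply List.ext_getElem
    · simp [hlen]
    · intro i h1 h2
      simp only [List.getElem_map, List.getElem_range]
      rw [yf, List.getD_eq_getElem _ _ (by omega)]
  rw [this]
  simp [← Multiset.map_coe, ← Multiset.coe_range]

theorem yf_sum : ∑ i ∈ range P.card, yf P i = P.sum := by
  conv_rhs => rw [parts_eq_map (P := P)]
  rw [Finset.sum]


def ck (d a k : ℕ) : ℕ := d * k.choose 2 + k * a

def xf (d a k : ℕ) (l : ℕ →₀ ℕ) (i : ℕ) : ℕ :=
  a + d * i + ∑ i' ∈ range (i + 1), l (k - 1 - i') / (k - i')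

variable {d a k : ℕ} {P : Multiset ℕ} {l : ℕ →₀ ℕ}

theorem xf_strict (hd : 1 ≤ d) {i j : ℕ} (h : i < j) : xf d a k l i + d ≤ xf d a k l j := by
  have h1 : d * i + d ≤ d * j := by
    have h2 : d * (i + 1) ≤ d * j := Nat.mul_le_mul_left d h
    rw [Nat.mul_succ] at h2
    omega
  have h2 : ∑ i' ∈ range (i + 1), l (k - 1 - i') / (k - i') ≤
      ∑ i' ∈ range (j + 1), l (k - 1 - i') / (k - i') :=
    Finset.sum_le_sum_of_subset (by simp; omega)
  simp only [xf]; omega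

theorem xf_sum (hdvd : ∀ j ∈ range k, (j + 1) ∣ l j) :
    ∑ i ∈ range k, xf d a k l i = ck d a k + ∑ j ∈ range k, l j := by
  have swap : ∑ i ∈ range k, ∑ i' ∈ range (i + 1), l (k - 1 - i') / (k - i')
      = ∑ i' ∈ range k, ∑ _i ∈ Ico i' k, l (k - 1 - i') / (k - i') := by
    apply Finset.sum_comm'
    intro x y
    simp only [mem_range, mem_Ico]
    omega
  have inner : ∀ i' ∈ range k, ∑ _i ∈ Ico i' k, l (k - 1 - i') / (k - i') = l (k - 1 - i') := by
    intro i' hi'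
    rw [Finset.sum_const, Nat.card_Ico, smul_eq_mul]
    have hik : i' < k := mem_range.1 hi'
    have : (k - i') ∣ l (k - 1 - i') := by
      have := hdvd (k - 1 - i') (mem_range.2 (by omega))
      have he : k - 1 - i' + 1 = k - i' := by omega
      rwa [he] at this
    exact Nat.mul_div_cancel' this
  have hrefl : ∑ i' ∈ range k, l (k - 1 - i') = ∑ j ∈ range k, l j :=
    Finset.sum_range_reflect _ _
  simp only [xf, Finset.sum_add_distrib, Finset.sum_const, card_range, smul_eq_mul, mul_one]
  rw [swap, Finset.sum_congr rfl inner, hrefl, ck, Nat.choose_two_right, ← Finset.mul_sum,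
    Finset.sum_range_id]
  ring

/-- gap function of a multiset. -/
noncomputable def gf (d a : ℕ) (P : Multiset ℕ) (i : ℕ) : ℕ :=
  if i = 0 then yf P 0 - a else yf P i - yf P (i - 1) - d

/-- the finsupp associated to a partition's parts. -/
noncomputable def phi (d a k : ℕ) (P : Multiset ℕ) : ℕ →₀ ℕ :=
  Finsupp.onFinset (range k) (fun j => if j < k then (j + 1) * gf d a (P) (k - 1 - j) else 0)
    (fun j h => mem_range.2 (by by_contra hc; simp [if_neg hc] at h))

theorem phi_apply {j : ℕ} (hj : j < k) : phi d a k P j = (j + 1) * gf d a P (k - 1 - j) := by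
  simp [phi, hj]

theorem phi_apply_ge {j : ℕ} (hj : ¬ j < k) : phi d a k P j = 0 := by
  simp [phi, hj]


section Conds
variable (hd : 1 ≤ d) (ha : 1 ≤ a) (hcard : P.card = k)
  (hge : ∀ i ∈ P, a ≤ i)
  (hnd : ∀ i : ℕ, P.count i ≤ 1)
  (hgap : ∀ i ∈ P, ∀ j ∈ P, i ≠ j → d ≤ i - j ∨ d ≤ j - i)

include hd hcard hnd hgap hge

theorem telescope : ∀ i < k, a + d * i + ∑ i' ∈ range (i + 1), gf d a P i' = yf P i := by
  intro i hi
  induction i with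
  | zero =>
    have h0 : a ≤ yf P 0 := hge _ (yf_mem (by omega))
    simp [gf]
    omega
  | succ i ih =>
    have hgap' : yf P i + d ≤ yf P (i + 1) := yf_gaps hd hnd hgap (Nat.lt_succ_self i) (by omega)
    have ih' := ih (by omega)
    rw [Finset.sum_range_succ]
    have hgfs : gf d a P (i + 1) = yf P (i + 1) - yf P i - d := by simp [gf]
    have hms : d * (i + 1) = d * i + d := Nat.mul_succ d i
    omega

theorem yf_ge : ∀ i < k, a + d * i ≤ yf P i := by
  intro i hi
  have := telescope hd hcard hge hnd hgap i hi
  omega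

theorem gf_sum : ck d a k + ∑ i ∈ range k, (k - i) * gf d a P i = P.sum := by
  have hP : ∑ i ∈ range k, yf P i = P.sum := by rw [← hcard, yf_sum]
  have expand : ∑ i ∈ range k, yf P i
      = ∑ i ∈ range k, (a + d * i + ∑ i' ∈ range (i + 1), gf d a P i') :=
    Finset.sum_congr rfl fun i hi => (telescope hd hcard hge hnd hgap i (mem_range.1 hi)).symm
  have swap : ∑ i ∈ range k, ∑ i' ∈ range (i + 1), gf d a P i'
      = ∑ i' ∈ range k, ∑ _i ∈ Ico i' k, gf d a P i' := by
    apply Finset.sum_comm'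
    intro x y
    simp only [mem_range, mem_Ico]
    omega
  rw [← hP, expand]
  simp only [Finset.sum_add_distrib, Finset.sum_const, card_range, smul_eq_mul, mul_one]
  rw [swap, ck, Nat.choose_two_right, ← Finset.mul_sum, Finset.sum_range_id]
  have : ∀ i' ∈ range k, ∑ _i ∈ Ico i' k, gf d a P i' = (k - i') * gf d a P i' := by
    intro i' _
    rw [Finset.sum_const, Nat.card_Ico, smul_eq_mul]
  rw [Finset.sum_congr rfl this]
  ring

theorem phi_sum : ck d a k + ∑ j ∈ range k, phi d a k P j = P.sum := by
  have h1 : ∑ j ∈ range k, phi d a k P j = ∑ j ∈ range k, (j + 1) * gf d a P (k - 1 - j) :=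
    Finset.sum_congr rfl fun j hj => phi_apply (mem_range.1 hj)
  have h2 : ∑ j ∈ range k, (k - (k - 1 - j)) * gf d a P (k - 1 - j)
      = ∑ i ∈ range k, (k - i) * gf d a P i :=
    Finset.sum_range_reflect (fun i => (k - i) * gf d a P i) k
  have h3 : ∀ j ∈ range k, (j + 1) * gf d a P (k - 1 - j)
      = (k - (k - 1 - j)) * gf d a P (k - 1 - j) := by
    intro j hj
    have := mem_range.1 hj
    congr 1
    omega
  rw [h1, Finset.sum_congr rfl h3, h2, gf_sum hd hcard hge hnd hgap]

theorem xf_phi : ∀ i < k, xf d a k (phi d a k P) i = yf P i := by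
  intro i hi
  have hterm : ∀ i' ∈ range (i + 1),
      phi d a k P (k - 1 - i') / (k - i') = gf d a P i' := by
    intro i' hi'
    have hi'i : i' ≤ i := by have := mem_range.1 hi'; omega
    have hj : k - 1 - i' < k := by omega
    rw [phi_apply hj]
    have e1 : k - 1 - i' + 1 = k - i' := by omega
    have e2 : k - 1 - (k - 1 - i') = i' := by omega
    rw [e1, e2, Nat.mul_div_cancel_left _ (by omega : 0 < k - i')]
  rw [xf, Finset.sum_congr rfl hterm, telescope hd hcard hge hnd hgap i hi]

end Conds

theorem yf_map_strictMono {f : ℕ → ℕ} (hf : StrictMono f) (k : ℕ) :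
    ∀ i < k, yf (Multiset.map f (range k).val) i = f i := by
  intro i hi
  have hms : Multiset.map f (range k).val = (((List.range k).map f : List ℕ) : Multiset ℕ) := by
    simp [← Multiset.map_coe, ← Multiset.coe_range]
  have hsorted : ((List.range k).map f).Pairwise (· ≤ ·) := by
    refine List.Pairwise.map f (fun {a b} h => le_of_lt (hf h)) ?_
    exact List.pairwise_lt_range
  have hperm : List.Perm ((Multiset.map f (range k).val).sort (· ≤ ·)) ((List.range k).map f) := by
    rw [← Multiset.coe_eq_coe, Multiset.sort_eq, hms]
  have heq : (Multiset.map f (range k).val).sort (· ≤ ·) = (List.range k).map f :=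
    List.Perm.eq_of_pairwise' (Multiset.pairwise_sort _ _) hsorted hperm
  rw [yf, heq, List.getD_eq_getElem _ _ (by simpa using hi)]
  simp

def conds (d a : ℕ) (P : Multiset ℕ) : Prop :=
  (∀ i ∈ P, a ≤ i) ∧ (∀ i : ℕ, P.count i ≤ 1) ∧
  (∀ i ∈ P, ∀ j ∈ P, i ≠ j → d ≤ i - j ∨ d ≤ j - i)

theorem xf_strictMono (hd : 1 ≤ d) : StrictMono (xf d a k l) := by
  intro i j hij
  have := xf_strict (l := l) (d := d) (a := a) (k := k) hd hij
  omega

theorem Q_conds (hd : 1 ≤ d) : conds d a (Multiset.map (xf d a k l) (range k).val) := by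
  set Q := Multiset.map (xf d a k l) (range k).val with hQ
  have hmem : ∀ i ∈ Q, ∃ i₀ < k, xf d a k l i₀ = i := by
    intro i hi
    rw [hQ, Multiset.mem_map] at hi
    obtain ⟨i₀, hi₀, rfl⟩ := hi
    exact ⟨i₀, by simpa using hi₀, rfl⟩
  refine ⟨?_, ?_, ?_⟩
  · intro i hi
    obtain ⟨i₀, _, rfl⟩ := hmem i hi
    simp only [xf]
    omega
  · have hndQ : Q.Nodup := by
      refine Multiset.Nodup.map_on ?_ (Finset.range k).nodup
      intro x hx y hy hxy
      exact (xf_strictMono hd).injective hxy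
    exact fun i => Multiset.nodup_iff_count_le_one.1 hndQ i
  · intro i hi j hj hij
    obtain ⟨i₀, _, rfl⟩ := hmem i hi
    obtain ⟨j₀, _, rfl⟩ := hmem j hj
    rcases Nat.lt_trichotomy i₀ j₀ with h | h | h
    · have := xf_strict (l := l) (d := d) (a := a) (k := k) hd h
      right; omega
    · exact absurd (by rw [h]) hij
    · have := xf_strict (l := l) (d := d) (a := a) (k := k) hd h
      left; omega

theorem phi_Q (hd : 1 ≤ d) (hsupp : l.support ⊆ range k)
    (hdvd : ∀ j ∈ range k, (j + 1) ∣ l j) :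
    phi d a k (Multiset.map (xf d a k l) (range k).val) = l := by
  set Q := Multiset.map (xf d a k l) (range k).val with hQ
  have hyf : ∀ i < k, yf Q i = xf d a k l i := yf_map_strictMono (xf_strictMono hd) k
  have hgf : ∀ i < k, gf d a Q i = l (k - 1 - i) / (k - i) := by
    intro i hi
    rcases Nat.eq_zero_or_pos i with rfl | hpos
    · rw [gf, if_pos rfl, hyf 0 hi]
      simp [xf]
    · rw [gf, if_neg (by omega), hyf i hi, hyf (i - 1) (by omega)]
      simp only [xf]
      have e1 : i - 1 + 1 = i := by omega
      rw [e1, Finset.sum_range_succ]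
      have h1 : d * i = d * (i - 1) + d := by
        conv_lhs => rw [show i = (i - 1) + 1 by omega]
        exact Nat.mul_succ d (i - 1)
      generalize l (k - 1 - i) / (k - i) = q
      omega
  ext j
  by_cases hj : j < k
  · rw [phi_apply hj, hgf _ (by omega)]
    have e2 : k - 1 - (k - 1 - j) = j := by omega
    have e1 : k - (k - 1 - j) = j + 1 := by omega
    rw [e1, e2, Nat.mul_div_cancel' (hdvd j (mem_range.2 hj))]
  · rw [phi_apply_ge hj]
    have : j ∉ l.support := fun hc => hj (mem_range.1 (hsupp hc))
    exact (Finsupp.notMem_support_iff.1 this).symm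

theorem main_card (hd : 1 ≤ d) (ha : 1 ≤ a) {k n m : ℕ} (hm : ck d a k + m = n) :
    #(filter (fun p : n.Partition => conds d a p.parts ∧ p.parts.card = k) univ)
    = #(filter (fun l : ℕ →₀ ℕ => ∀ j ∈ range k, (j + 1) ∣ l j)
        ((range k).finsuppAntidiag m)) := by
  have hmemt : ∀ l : ℕ →₀ ℕ,
      l ∈ filter (fun l : ℕ →₀ ℕ => ∀ j ∈ range k, (j + 1) ∣ l j)
        ((range k).finsuppAntidiag m) →
      (∑ j ∈ range k, l j = m ∧ l.support ⊆ range k) ∧ ∀ j ∈ range k, (j + 1) ∣ l j := by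
    intro l hl
    rw [mem_filter, Finset.mem_finsuppAntidiag] at hl
    exact ⟨hl.1, hl.2⟩
  refine Finset.card_bij' (fun p _ => phi d a k p.parts)
    (fun l hl => ⟨Multiset.map (xf d a k l) (range k).val, ?_, ?_⟩) ?_ ?_ ?_ ?_
  · intro i hi
    rw [Multiset.mem_map] at hi
    obtain ⟨i₀, _, rfl⟩ := hi
    simp only [xf]
    omega
  · obtain ⟨⟨hsum, _⟩, hdvd⟩ := hmemt _ hl
    show ∑ i ∈ range k, xf d a k l i = n
    rw [xf_sum hdvd, hsum, hm]
  -- forward membership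
  · intro p hp
    rw [mem_filter] at hp
    obtain ⟨-, ⟨hge, hnd, hgap⟩, hcard⟩ := hp
    rw [mem_filter, Finset.mem_finsuppAntidiag]
    refine ⟨⟨?_, Finsupp.support_onFinset_subset⟩, fun j hj => ?_⟩
    · have := phi_sum hd hcard hge hnd hgap
      rw [p.parts_sum] at this
      show ∑ j ∈ range k, phi d a k p.parts j = m
      omega
    · rw [phi_apply (mem_range.1 hj)]
      exact Dvd.intro _ rfl
  -- backward membership
  · intro l hl
    obtain ⟨⟨hsum, hsupp⟩, hdvd⟩ := hmemt _ hl
    rw [mem_filter]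
    refine ⟨mem_univ _, Q_conds hd, by simp⟩
  -- left inverse
  · intro p hp
    rw [mem_filter] at hp
    obtain ⟨-, ⟨hge, hnd, hgap⟩, hcard⟩ := hp
    apply Nat.Partition.ext
    simp only
    conv_rhs => rw [parts_eq_map (P := p.parts), hcard]
    apply Multiset.map_congr rfl
    intro i hi
    have hik : i < k := by
      have : i ∈ range k := by exact_mod_cast hi
      exact mem_range.1 this
    exact xf_phi hd hcard hge hnd hgap i hik
  -- right inverse
  · intro l hl
    obtain ⟨⟨hsum, hsupp⟩, hdvd⟩ := hmemt _ hl
    exact phi_Q hd hsupp hdvd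


/-- A convenience constructor for the power series whose coefficients indicate a subset. -/
noncomputable def indicatorSeries (α : Type*) [Semiring α] (s : Set ℕ) : PowerSeries α :=
  PowerSeries.mk fun n => if n ∈ s then 1 else 0

theorem coeff_indicator {α : Type*} (s : Set ℕ) [Semiring α] (n : ℕ) :
    coeff n (indicatorSeries α s) = if n ∈ s then 1 else 0 :=
  coeff_mk _ _

theorem constantCoeff_indicator {α : Type*} (s : Set ℕ) [Semiring α] :
    constantCoeff (indicatorSeries α s) = if 0 ∈ s then 1 else 0 :=
  rfl

theorem num_series' {α : Type*} [Field α] (i : ℕ) :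
    (1 - (X : PowerSeries α) ^ (i + 1))⁻¹ = indicatorSeries α {k | i + 1 ∣ k} := by
  rw [PowerSeries.inv_eq_iff_mul_eq_one]
  · ext n
    cases n with
    | zero => simp [mul_sub, zero_pow, constantCoeff_indicator]
    | succ n =>
      simp only [coeff_one, if_false, mul_sub, mul_one, coeff_indicator,
        LinearMap.map_sub, reduceCtorEq]
      simp_rw [coeff_mul, coeff_X_pow, coeff_indicator, @boole_mul _ _ _ _]
      rw [sub_eq_zero]
      simp only [← ite_and]
      erw [Finset.sum_boole]
      symm
      split_ifs with h
      · suffices #{a ∈ antidiagonal (n + 1) | i + 1 ∣ a.fst ∧ a.snd = i + 1} = 1 by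
          simp only [Set.mem_setOf_eq]; convert congr_arg ((↑) : ℕ → α) this; norm_cast
        rw [card_eq_one]
        cases' h with p hp
        refine ⟨((i + 1) * (p - 1), i + 1), ?_⟩
        ext ⟨a₁, a₂⟩
        simp only [mem_filter, Prod.mk.injEq, HasAntidiagonal.mem_antidiagonal, mem_singleton]
        constructor
        · rintro ⟨a_left, ⟨a, rfl⟩, rfl⟩
          refine ⟨?_, rfl⟩
          rw [Nat.mul_sub_left_distrib, ← hp, ← a_left, mul_one, Nat.add_sub_cancel]
        · rintro ⟨rfl, rfl⟩
          match p with
          | 0 => rw [mul_zero] at hp; cases hp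
          | p + 1 => rw [hp]; simp [mul_add]
      · suffices #{a ∈ antidiagonal (n + 1) | i + 1 ∣ a.fst ∧ a.snd = i + 1} = 0 by
          simp only [Set.mem_setOf_eq]; convert congr_arg ((↑) : ℕ → α) this; norm_cast
        rw [card_eq_zero]
        apply eq_empty_of_forall_notMem
        simp only [Prod.forall, mem_filter, not_and, HasAntidiagonal.mem_antidiagonal]
        rintro _ h₁ h₂ ⟨a, rfl⟩ rfl
        apply h
        simp [← h₂]
  · simp [zero_pow]

theorem coeff_prod_inv (k m : ℕ) :
    PowerSeries.coeff (R := ℚ) m (∏ j ∈ range k, (1 - (PowerSeries.X : PowerSeries ℚ) ^ (j + 1))⁻¹)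
      = #(filter (fun l : ℕ →₀ ℕ => ∀ j ∈ range k, (j + 1) ∣ l j)
          ((range k).finsuppAntidiag m)) := by
  simp_rw [num_series']
  rw [PowerSeries.coeff_prod]
  simp only [coeff_indicator, Set.mem_setOf_eq]
  have h1 : ∀ l ∈ (range k).finsuppAntidiag m,
      (∏ i ∈ range k, if (i + 1) ∣ l i then (1:ℚ) else 0)
        = @ite ℚ (∀ i ∈ range k, (i + 1) ∣ l i) (Classical.propDecidable _) 1 0 :=
    fun l _ => by
      convert Finset.prod_boole
  refine Eq.trans (Finset.sum_congr rfl h1) ?_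
  convert Finset.sum_boole (fun l : ℕ →₀ ℕ => ∀ i ∈ range k, (i + 1) ∣ l i)
    ((range k).finsuppAntidiag m) using 2
  split_ifs <;> rfl

theorem qPoch_inv (k : ℕ) :
    (qPoch k)⁻¹ = ∏ j ∈ range k, (1 - (PowerSeries.X : PowerSeries ℚ) ^ (j + 1))⁻¹ := by
  have hc : constantCoeff (qPoch k) ≠ 0 := by
    rw [qPoch, map_prod]
    have h1 : ∀ j ∈ range k, constantCoeff (1 - (PowerSeries.X : PowerSeries ℚ) ^ (j + 1)) = 1 :=
      fun j _ => by simp [zero_pow]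
    rw [Finset.prod_congr rfl h1, Finset.prod_const_one]
    exact one_ne_zero
  rw [PowerSeries.inv_eq_iff_mul_eq_one hc, qPoch, ← Finset.prod_mul_distrib]
  rw [Finset.prod_eq_one]
  intro j _
  exact PowerSeries.inv_mul_cancel _ (by simp [zero_pow])

theorem partition_card_le (n : ℕ) (p : n.Partition) : p.parts.card ≤ n := by
  have h1 := p.parts_sum
  calc Multiset.card p.parts = (Multiset.map (fun _ => 1) p.parts).sum := by simp
  _ ≤ (Multiset.map id p.parts).sum :=
    Multiset.sum_map_le_sum_map _ _ (fun i hi => p.parts_pos hi)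
  _ = n := by rw [Multiset.map_id]; exact h1

end S5

theorem stmt5 (d a : ℕ) (hd : 1 ≤ d) (ha : 1 ≤ a) (n : ℕ) (hn : 1 ≤ n) :
    (qpart d a n : ℚ) =
      ∑ k ∈ Finset.range (n + 1),
        PowerSeries.coeff n
          ((PowerSeries.X : PowerSeries ℚ) ^ (d * k.choose 2 + k * a) * (qPoch k)⁻¹) := by
  classical
  have h0 : qpart d a n
      = (Finset.filter (fun p : n.Partition => S5.conds d a p.parts) Finset.univ).card := by
    rw [qpart, Nat.card_eq_fintype_card, Fintype.card_subtype]
    congr 1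
    apply Finset.filter_congr
    intro p _
    simp [S5.conds]
  have h1 : (Finset.filter (fun p : n.Partition => S5.conds d a p.parts) Finset.univ).card
      = ∑ k ∈ Finset.range (n + 1),
        (Finset.filter (fun p : n.Partition => S5.conds d a p.parts ∧ p.parts.card = k)
          Finset.univ).card := by
    rw [Finset.card_eq_sum_card_fiberwise
      (f := fun p : n.Partition => p.parts.card) (t := Finset.range (n + 1))
      (fun p _ => Finset.mem_range.2 (Nat.lt_succ_of_le (S5.partition_card_le n p)))]
    exact Finset.sum_congr rfl fun k _ => by rw [Finset.filter_filter]
  rw [h0, h1, Nat.cast_sum]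
  apply Finset.sum_congr rfl
  intro k _
  by_cases hck : S5.ck d a k ≤ n
  · obtain ⟨m, hm⟩ : ∃ m, S5.ck d a k + m = n := ⟨n - S5.ck d a k, by omega⟩
    rw [S5.main_card hd ha hm, ← S5.coeff_prod_inv k m, S5.qPoch_inv]
    have hm' : n = m + (d * k.choose 2 + k * a) := by rw [← hm, S5.ck]; ring
    rw [hm', PowerSeries.coeff_X_pow_mul]
  · have hempty : Finset.filter
        (fun p : n.Partition => S5.conds d a p.parts ∧ p.parts.card = k) Finset.univ = ∅ := by
      rw [Finset.filter_eq_empty_iff]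
      rintro p - ⟨⟨hge, hnd, hgap⟩, hcard⟩
      have := S5.gf_sum hd hcard hge hnd hgap
      rw [p.parts_sum] at this
      omega
    rw [hempty]
    have hexp : ¬ d * k.choose 2 + k * a ≤ n := by
      rw [show d * k.choose 2 + k * a = S5.ck d a k from rfl]; omega
    rw [mul_comm, PowerSeries.coeff_mul_X_pow', if_neg hexp]
    simp
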